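/- Let a < b be positive integers and m a positive integer, and let G = K_{bm} + (am+1)K_1, which has order n = (a+b)m + 1. Then for any two nonadjacent vertices u and v of G (both necessarily in the independent part), bn/(a+b) > |N_G(u) ∪ N_G(v)| = bm > bn/(a+b) − 1. Consequently the neighborhood-union bound bn/(a+b) in the sufficient condition for all fractional [a,b]-factors cannot be replaced by bn/(a+b) − 1. -/

import Mathlib

open Finset
open scoped Classical

/-- The graph `K_{bm} + (am+1)K₁`: the join of a complete graph on `bm` vertices (the left
summands) with an edgeless graph on `am+1` vertices (the right summands). -/
def joinGraph (a b m : ℕ) : SimpleGraph (Fin (b * m) ⊕ Fin (a * m + 1)) :=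
  SimpleGraph.fromRel fun x y => x.isLeft ∨ y.isLeft

/-- **Sharpness of the neighborhood-union bound.** `G = K_{bm} + (am+1)K₁` has order
`n = (a+b)m + 1`, and for any two nonadjacent vertices `u ≠ v` of `G`,
`bn/(a+b) > |N_G(u) ∪ N_G(v)| = bm > bn/(a+b) − 1`. -/
theorem join_graph_neighborhood_union (a b m : ℕ) (ha : 0 < a) (hab : a < b) (hm : 0 < m)
    (u v : Fin (b * m) ⊕ Fin (a * m + 1)) (huv : u ≠ v)
    (hadj : ¬ (joinGraph a b m).Adj u v) :
    Fintype.card (Fin (b * m) ⊕ Fin (a * m + 1)) = (a + b) * m + 1 ∧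
    (((joinGraph a b m).neighborFinset u ∪ (joinGraph a b m).neighborFinset v).card : ℝ) =
      (b : ℝ) * m ∧
    (b : ℝ) * (Fintype.card (Fin (b * m) ⊕ Fin (a * m + 1))) / ((a : ℝ) + b) >
      (b : ℝ) * m ∧
    (b : ℝ) * m >
      (b : ℝ) * (Fintype.card (Fin (b * m) ⊕ Fin (a * m + 1))) / ((a : ℝ) + b) - 1 := by
  have hcard : Fintype.card (Fin (b * m) ⊕ Fin (a * m + 1)) = (a + b) * m + 1 := by
    simp [Fintype.card_sum]; ring
  -- u is not left
  have hul : ¬ u.isLeft := by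
    intro h
    exact hadj ⟨huv, Or.inl (Or.inl h)⟩
  have hvl : ¬ v.isLeft := by
    intro h
    exact hadj ⟨huv, Or.inl (Or.inr h)⟩
  have hnbr : ∀ w : Fin (b * m) ⊕ Fin (a * m + 1), ¬ w.isLeft →
      (joinGraph a b m).neighborFinset w = univ.filter (fun x => x.isLeft = true) := by
    intro w hw
    ext x
    simp only [SimpleGraph.mem_neighborFinset, mem_filter, mem_univ, true_and]
    simp only [joinGraph, SimpleGraph.fromRel_adj]
    constructor
    · rintro ⟨-, (h | h) | (h | h)⟩ <;> first | exact h | exact absurd h hw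
    · intro hx
      exact ⟨fun he => hw (he ▸ hx), Or.inl (Or.inr hx)⟩
  have hunion : ((joinGraph a b m).neighborFinset u ∪ (joinGraph a b m).neighborFinset v)
      = univ.filter (fun x => x.isLeft = true) := by
    rw [hnbr u hul, hnbr v hvl, union_self]
  have hfc : (univ.filter (fun x : Fin (b * m) ⊕ Fin (a * m + 1) => x.isLeft = true)).card = b * m := by
    have : (univ.filter (fun x : Fin (b * m) ⊕ Fin (a * m + 1) => x.isLeft = true))
        = (univ : Finset (Fin (b * m))).map ⟨Sum.inl, Sum.inl_injective⟩ := by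
      ext x
      cases x <;> simp
    rw [this]; simp
  have hc2 : (((joinGraph a b m).neighborFinset u ∪ (joinGraph a b m).neighborFinset v).card : ℝ)
      = (b : ℝ) * m := by
    rw [hunion, hfc]; push_cast; ring
  have hab' : (0:ℝ) < (a:ℝ) + b := by positivity
  refine ⟨hcard, hc2, ?_, ?_⟩
  · rw [hcard, gt_iff_lt, lt_div_iff₀ hab']
    have hb : (0:ℝ) < b := by exact_mod_cast ha.trans hab
    push_cast
    nlinarith [hb]
  · rw [hcard, gt_iff_lt, sub_lt_iff_lt_add, div_lt_iff₀ hab']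
    have ha' : (0:ℝ) < a := by exact_mod_cast ha
    push_cast
    nlinarith [ha']
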